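/- arXiv:2106.00336 — 2 statements merged into one kernel-verified Lean document; each statement's English description precedes it below -/
import Mathlib

section
/- Let N be a Novikov algebra and θ a left-symmetric 2-cocycle on N with values in ℂ. Then the central extension N_θ is a Novikov algebra if and only if θ(xy, z) = θ(xz, y) for all x, y, z ∈ N. -/
/-- The central extension product on `N ⊕ ℂ` given by a cocycle `θ`. -/
def extMul {N : Type*} [AddCommGroup N] [Module ℂ N]
    (mul : N →ₗ[ℂ] N →ₗ[ℂ] N) (θ : N →ₗ[ℂ] N →ₗ[ℂ] ℂ) (p q : N × ℂ) : N × ℂ :=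
  (mul p.1 q.1, θ p.1 q.1)

/-- For a Novikov algebra `N` and a left-symmetric 2-cocycle `θ`
with values in `ℂ`, the central extension `N_θ` is a Novikov algebra if and only
if `θ(xy, z) = θ(xz, y)` for all `x, y, z ∈ N`. -/
theorem central_extension_novikov_iff
    {N : Type*} [AddCommGroup N] [Module ℂ N]
    (mul : N →ₗ[ℂ] N →ₗ[ℂ] N)
    (hLS : ∀ x y z : N,
      mul (mul x y) z - mul x (mul y z) = mul (mul y x) z - mul y (mul x z))
    (hNov : ∀ x y z : N, mul (mul x y) z = mul (mul x z) y)
    (θ : N →ₗ[ℂ] N →ₗ[ℂ] ℂ)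
    (hθ : ∀ x y z : N,
      θ (mul x y) z - θ x (mul y z) = θ (mul y x) z - θ y (mul x z)) :
    (∀ p q r : N × ℂ,
        extMul mul θ (extMul mul θ p q) r = extMul mul θ (extMul mul θ p r) q) ↔
    (∀ x y z : N, θ (mul x y) z = θ (mul x z) y) := by
  constructor
  · intro h x y z
    have := congrArg Prod.snd (h (x, 0) (y, 0) (z, 0))
    simpa [extMul] using this
  · intro h p q r
    have h1 := hNov p.1 q.1 r.1
    have h2 := h p.1 q.1 r.1
    simp [extMul, Prod.ext_iff, h1, h2]
end

section
/- The automorphism group of the 2-dimensional complex algebra L²*₀₁ with basis e₁,e₂ and only nonzero product e₁e₁ = e₂ consists exactly of the linear maps φ given by φ(e₁) = x e₁ + y e₂, φ(e₂) = x² e₂ with x ≠ 0, y ∈ ℂ. -/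
/-- Multiplication of the algebra `L²*₀₁`: on the basis `e₁, e₂` (indexed
`0,1`) the only nonzero product is `e₁e₁ = e₂`. -/
def mulL201 (x y : Fin 2 → ℂ) : Fin 2 → ℂ :=
  ![0, x 0 * y 0]

/-- The standard basis vector. -/
def e (i : Fin 2) : Fin 2 → ℂ := Pi.single i 1

lemma decomp (v : Fin 2 → ℂ) : v = v 0 • e 0 + v 1 • e 1 := by
  funext i
  fin_cases i <;> simp [e, Pi.single_apply]

lemma mul_eq (a b : Fin 2 → ℂ) : mulL201 a b = (a 0 * b 0) • e 1 := by
  funext i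
  fin_cases i <;> simp [mulL201, e, Pi.single_apply]

/-- the automorphism group of `L²*₀₁` consists exactly of the
invertible linear maps `φ` with `φ(e₁) = x e₁ + y e₂`, `φ(e₂) = x² e₂`,
`x ≠ 0`, `y ∈ ℂ`. -/
theorem L201_automorphisms (φ : (Fin 2 → ℂ) ≃ₗ[ℂ] (Fin 2 → ℂ)) :
    (∀ a b : Fin 2 → ℂ, φ (mulL201 a b) = mulL201 (φ a) (φ b)) ↔
    (∃ x y : ℂ, x ≠ 0 ∧ φ (e 0) = x • e 0 + y • e 1 ∧ φ (e 1) = x ^ 2 • e 1) := by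
  constructor
  · intro h
    set x := φ (e 0) 0 with hx
    set y := φ (e 0) 1 with hy
    refine ⟨x, y, ?_, (decomp (φ (e 0))), ?_⟩
    · intro h0
      have h1 : φ (e 1) = x ^ 2 • e 1 := by
        have := h (e 0) (e 0)
        rw [mul_eq, mul_eq] at this
        simpa [e, Pi.single_apply, sq, x] using this
      have : φ (e 1) = 0 := by rw [h1, h0]; simp
      have := φ.injective (this.trans (map_zero φ).symm)
      have h2 := congrFun this 1
      simp [e, Pi.single_apply] at h2
    · have := h (e 0) (e 0)
      rw [mul_eq, mul_eq] at this
      simpa [e, Pi.single_apply, sq, x] using this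
  · rintro ⟨x, y, hx, h0, h1⟩
    intro a b
    have ha : φ a = a 0 • φ (e 0) + a 1 • φ (e 1) := by
      conv_lhs => rw [decomp a]
      simp
    have hb : φ b = b 0 • φ (e 0) + b 1 • φ (e 1) := by
      conv_lhs => rw [decomp b]
      simp
    rw [mul_eq, mul_eq, map_smul, h1, ha, hb, h0, h1]
    funext i
    fin_cases i <;> simp [e, Pi.single_apply] <;> ring
end
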